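/- Let G be a one-sided POSG, let V, W : Δ(S) → ℝ be convex continuous functions, and let b ∈ Δ(S) be such that [HV](b) ≤ [HW](b), where H is the minimax operator. Let (π1^V, π2^V) be a Nash equilibrium of the stage game with payoff u^{V,b}, i.e. u^{V,b}(π1, π2^V) ≤ u^{V,b}(π1^V, π2^V) ≤ u^{V,b}(π1^V, π2) for all π1 ∈ Π1 and π2 ∈ Π2, and likewise let (π1^W, π2^W) be a Nash equilibrium of the stage game with payoff u^{W,b}. Let C ≥ 0. If W(τ(b, a1, π2^V, o)) − V(τ(b, a1, π2^V, o)) ≤ C for every action a1 ∈ A1 with π1^W(a1) > 0 and every observation o ∈ O with Pr_{b,π1^W,π2^V}[a1, o] > 0, then [HW](b) − [HV](b) ≤ γC. -/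

import Mathlib

open scoped BigOperators

noncomputable section

/-- ℓ1 distance on `S → ℝ`. -/
def l1dist {S : Type*} [Fintype S] (p q : S → ℝ) : ℝ := ∑ s, |p s - q s|

/-- Evaluation at a belief `b` of the linear function on the simplex with vertex values
`α : S → ℝ`. -/
def lineval {S : Type*} [Fintype S] (α : S → ℝ) (b : S → ℝ) : ℝ := ∑ s, b s * α s

/-- `f` is `k`-Lipschitz with respect to the ℓ1 metric on the probability simplex. -/
def LipOnSimplex {S : Type*} [Fintype S] (k : ℝ) (f : (S → ℝ) → ℝ) : Prop :=
  ∀ p ∈ stdSimplex ℝ S, ∀ q ∈ stdSimplex ℝ S, |f p - f q| ≤ k * l1dist p q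

/-- A one-sided partially observable stochastic game. -/
structure OSPOSG (S A1 A2 O : Type*) [Fintype S] [Fintype A1] [Fintype A2] [Fintype O] where
  /-- transition function: `T s a1 a2 o s'` is the probability of observing `o` and moving
  to `s'` from `s` under actions `a1, a2`. -/
  T : S → A1 → A2 → O → S → ℝ
  T_nonneg : ∀ s a1 a2 o s', 0 ≤ T s a1 a2 o s'
  T_sum : ∀ s a1 a2, ∑ o, ∑ s', T s a1 a2 o s' = 1
  /-- reward function of player 1 -/
  R : S → A1 → A2 → ℝ
  /-- discount factor -/
  γ : ℝ
  γ_pos : 0 < γ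
  γ_lt_one : γ < 1

namespace OSPOSG

variable {S A1 A2 O : Type*} [Fintype S] [Fintype A1] [Fintype A2] [Fintype O]
  [Nonempty S] [Nonempty A1] [Nonempty A2] [Nonempty O]

/-- The minimum reward `r_min`. -/
def rmin (G : OSPOSG S A1 A2 O) : ℝ :=
  Finset.univ.inf' Finset.univ_nonempty fun x : S × A1 × A2 => G.R x.1 x.2.1 x.2.2

/-- The maximum reward `r_max`. -/
def rmax (G : OSPOSG S A1 A2 O) : ℝ :=
  Finset.univ.sup' Finset.univ_nonempty fun x : S × A1 × A2 => G.R x.1 x.2.1 x.2.2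

/-- `L = r_min / (1 - γ)`. -/
def Lval (G : OSPOSG S A1 A2 O) : ℝ := G.rmin / (1 - G.γ)

/-- `U = r_max / (1 - γ)`. -/
def Uval (G : OSPOSG S A1 A2 O) : ℝ := G.rmax / (1 - G.γ)

/-- `δ = (U - L) / 2`. -/
def δval (G : OSPOSG S A1 A2 O) : ℝ := (G.Uval - G.Lval) / 2

/-- The set of stage strategies of player 2. -/
def Pi2 (S A2 : Type*) [Fintype A2] : Set (S → A2 → ℝ) :=
  {π2 | ∀ s, π2 s ∈ stdSimplex ℝ A2}

/-- Vertex values of the value composition `valcomp(π1, ᾱ)`. -/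
def valcompVert (G : OSPOSG S A1 A2 O) (π1 : A1 → ℝ) (αb : A1 → O → S → ℝ) (s : S) : ℝ :=
  Finset.univ.inf' Finset.univ_nonempty fun a2 =>
    ∑ a1, π1 a1 * (G.R s a1 a2 + G.γ * ∑ o, ∑ s', G.T s a1 a2 o s' * αb a1 o s')

/-- The value composition `valcomp(π1, ᾱ)`, a linear function of the belief `b`. -/
def valcomp (G : OSPOSG S A1 A2 O) (π1 : A1 → ℝ) (αb : A1 → O → S → ℝ) (b : S → ℝ) : ℝ :=
  ∑ s, b s * G.valcompVert π1 αb s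

/-- `Pr_{b,π1,π2}[a1, o]`: the probability that player 1 plays `a1` and observes `o`. -/
def Pr (G : OSPOSG S A1 A2 O) (b : S → ℝ) (π1 : A1 → ℝ) (π2 : S → A2 → ℝ)
    (a1 : A1) (o : O) : ℝ :=
  ∑ s, ∑ a2, ∑ s', b s * π1 a1 * π2 s a2 * G.T s a1 a2 o s'

/-- The updated belief `τ(b, a1, π2, o)` of player 1 (junk value `0` if the normalizing
constant vanishes; such terms are always multiplied by a zero probability below). -/
def beliefUpd (G : OSPOSG S A1 A2 O) (b : S → ℝ) (a1 : A1) (π2 : S → A2 → ℝ) (o : O) :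
    S → ℝ := fun s' =>
  (∑ s, ∑ a2, b s * π2 s a2 * G.T s a1 a2 o s') /
    (∑ s'', ∑ s, ∑ a2, b s * π2 s a2 * G.T s a1 a2 o s'')

/-- The stage utility `u^{V,b}(π1, π2)`. -/
def stageU (G : OSPOSG S A1 A2 O) (V : (S → ℝ) → ℝ) (b : S → ℝ)
    (π1 : A1 → ℝ) (π2 : S → A2 → ℝ) : ℝ :=
  (∑ s, ∑ a1, ∑ a2, b s * π1 a1 * π2 s a2 * G.R s a1 a2) +
    G.γ * ∑ a1, ∑ o, G.Pr b π1 π2 a1 o * V (G.beliefUpd b a1 π2 o)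

/-- The minimax (Bellman) operator `[HV](b) = sup_{π1} inf_{π2} u^{V,b}(π1,π2)`. -/
def Hop (G : OSPOSG S A1 A2 O) (V : (S → ℝ) → ℝ) (b : S → ℝ) : ℝ :=
  ⨆ π1 : stdSimplex ℝ A1, ⨅ π2 : Pi2 S A2, G.stageU V b π1.1 π2.1

end OSPOSG

namespace OSPOSG

variable {S A1 A2 O : Type*} [Fintype S] [Fintype A1] [Fintype A2] [Fintype O]
  [Nonempty S] [Nonempty A1] [Nonempty A2] [Nonempty O]

lemma Pr_nonneg' (G : OSPOSG S A1 A2 O) {b : S → ℝ} (hb : b ∈ stdSimplex ℝ S)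
    {π1 : A1 → ℝ} (hπ1 : π1 ∈ stdSimplex ℝ A1) {π2 : S → A2 → ℝ} (hπ2 : π2 ∈ Pi2 S A2)
    (a1 : A1) (o : O) : 0 ≤ G.Pr b π1 π2 a1 o := by
  refine Finset.sum_nonneg fun s _ => Finset.sum_nonneg fun a2 _ =>
    Finset.sum_nonneg fun s' _ => ?_
  exact mul_nonneg (mul_nonneg (mul_nonneg (hb.1 s) (hπ1.1 a1)) ((hπ2 s).1 a2))
    (G.T_nonneg s a1 a2 o s')

lemma Pr_total (G : OSPOSG S A1 A2 O) {b : S → ℝ} (hb : b ∈ stdSimplex ℝ S)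
    {π1 : A1 → ℝ} (hπ1 : π1 ∈ stdSimplex ℝ A1) {π2 : S → A2 → ℝ} (hπ2 : π2 ∈ Pi2 S A2) :
    ∑ a1, ∑ o, G.Pr b π1 π2 a1 o = 1 := by
  have key : ∀ a1, ∑ o, G.Pr b π1 π2 a1 o = π1 a1 := by
    intro a1
    unfold Pr
    rw [Finset.sum_comm]
    have h1 : ∀ s ∈ Finset.univ (α := S),
        (∑ o, ∑ a2, ∑ s', b s * π1 a1 * π2 s a2 * G.T s a1 a2 o s')
          = b s * π1 a1 := by
      intro s _
      rw [Finset.sum_comm]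
      have h2 : ∀ a2 ∈ Finset.univ (α := A2),
          (∑ o, ∑ s', b s * π1 a1 * π2 s a2 * G.T s a1 a2 o s')
            = b s * π1 a1 * π2 s a2 := by
        intro a2 _
        simp only [← Finset.mul_sum]
        rw [G.T_sum, mul_one]
      rw [Finset.sum_congr rfl h2, ← Finset.mul_sum, (hπ2 s).2, mul_one]
    rw [Finset.sum_congr rfl h1, ← Finset.sum_mul, hb.2, one_mul]
  rw [Finset.sum_congr rfl fun a1 _ => key a1, hπ1.2]

lemma beliefUpd_cases (G : OSPOSG S A1 A2 O) {b : S → ℝ} (hb : b ∈ stdSimplex ℝ S)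
    {π2 : S → A2 → ℝ} (hπ2 : π2 ∈ Pi2 S A2) (a1 : A1) (o : O) :
    G.beliefUpd b a1 π2 o ∈ stdSimplex ℝ S ∨ G.beliefUpd b a1 π2 o = (fun _ => 0) := by
  set f : S → ℝ := fun s' => ∑ s, ∑ a2, b s * π2 s a2 * G.T s a1 a2 o s' with hf
  have hfnn : ∀ s', 0 ≤ f s' := fun s' =>
    Finset.sum_nonneg fun s _ => Finset.sum_nonneg fun a2 _ =>
      mul_nonneg (mul_nonneg (hb.1 s) ((hπ2 s).1 a2)) (G.T_nonneg s a1 a2 o s')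
  set d : ℝ := ∑ s'', f s'' with hd
  have hdnn : 0 ≤ d := Finset.sum_nonneg fun s'' _ => hfnn s''
  have hbu : G.beliefUpd b a1 π2 o = fun s' => f s' / d := rfl
  rcases eq_or_lt_of_le hdnn with h0 | hpos
  · right
    have : ∀ s', f s' = 0 := by
      intro s'
      have := (Finset.sum_eq_zero_iff_of_nonneg (fun s'' _ => hfnn s'')).mp h0.symm
      exact this s' (Finset.mem_univ s')
    funext s'
    rw [hbu]
    simp [this s']
  · left
    constructor
    · intro s'
      exact div_nonneg (hfnn s') hdnn
    · rw [hbu]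
      simp only
      rw [← Finset.sum_div, div_self (ne_of_gt hpos)]

lemma stageU_diff (G : OSPOSG S A1 A2 O) (V W : (S → ℝ) → ℝ) (b : S → ℝ)
    (π1 : A1 → ℝ) (π2 : S → A2 → ℝ) :
    G.stageU W b π1 π2 - G.stageU V b π1 π2 =
      G.γ * ∑ a1, ∑ o, G.Pr b π1 π2 a1 o *
        (W (G.beliefUpd b a1 π2 o) - V (G.beliefUpd b a1 π2 o)) := by
  unfold stageU
  simp only [Finset.mul_sum, mul_sub, Finset.sum_sub_distrib]
  ring

lemma weight_total (G : OSPOSG S A1 A2 O) {b : S → ℝ} (hb : b ∈ stdSimplex ℝ S)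
    {π1 : A1 → ℝ} (hπ1 : π1 ∈ stdSimplex ℝ A1) {π2 : S → A2 → ℝ} (hπ2 : π2 ∈ Pi2 S A2) :
    ∑ s, ∑ a1, ∑ a2, b s * π1 a1 * π2 s a2 = 1 := by
  have h1 : ∀ s ∈ Finset.univ (α := S),
      (∑ a1, ∑ a2, b s * π1 a1 * π2 s a2) = b s := by
    intro s _
    have h2 : ∀ a1 ∈ Finset.univ (α := A1),
        (∑ a2, b s * π1 a1 * π2 s a2) = b s * π1 a1 := by
      intro a1 _
      rw [← Finset.mul_sum, (hπ2 s).2, mul_one]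
    rw [Finset.sum_congr rfl h2, ← Finset.mul_sum, hπ1.2, mul_one]
  rw [Finset.sum_congr rfl h1, hb.2]

/-- maximum absolute reward -/
def rabs (G : OSPOSG S A1 A2 O) : ℝ :=
  Finset.univ.sup' Finset.univ_nonempty fun x : S × A1 × A2 => |G.R x.1 x.2.1 x.2.2|

lemma stageU_abs_le (G : OSPOSG S A1 A2 O) (V : (S → ℝ) → ℝ) {b : S → ℝ}
    (hb : b ∈ stdSimplex ℝ S) {π1 : A1 → ℝ} (hπ1 : π1 ∈ stdSimplex ℝ A1)
    {π2 : S → A2 → ℝ} (hπ2 : π2 ∈ Pi2 S A2) (K : ℝ)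
    (hKs : ∀ p ∈ stdSimplex ℝ S, |V p| ≤ K) (hK0 : |V (fun _ => 0)| ≤ K) :
    |G.stageU V b π1 π2| ≤ G.rabs + G.γ * K := by
  have hτ : ∀ a1 o, |V (G.beliefUpd b a1 π2 o)| ≤ K := by
    intro a1 o
    rcases G.beliefUpd_cases hb hπ2 a1 o with h | h
    · exact hKs _ h
    · rw [h]; exact hK0
  have ht1 : |∑ s, ∑ a1, ∑ a2, b s * π1 a1 * π2 s a2 * G.R s a1 a2| ≤ G.rabs := by
    calc |∑ s, ∑ a1, ∑ a2, b s * π1 a1 * π2 s a2 * G.R s a1 a2|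
        ≤ ∑ s, ∑ a1, ∑ a2, b s * π1 a1 * π2 s a2 * G.rabs := by
          refine (Finset.abs_sum_le_sum_abs _ _).trans
            (Finset.sum_le_sum fun s _ => (Finset.abs_sum_le_sum_abs _ _).trans
              (Finset.sum_le_sum fun a1 _ => (Finset.abs_sum_le_sum_abs _ _).trans
                (Finset.sum_le_sum fun a2 _ => ?_)))
          rw [abs_mul]
          have hw : 0 ≤ b s * π1 a1 * π2 s a2 :=
            mul_nonneg (mul_nonneg (hb.1 s) (hπ1.1 a1)) ((hπ2 s).1 a2)
          rw [abs_of_nonneg hw]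
          exact mul_le_mul_of_nonneg_left
            (Finset.le_sup' (fun x : S × A1 × A2 => |G.R x.1 x.2.1 x.2.2|)
              (Finset.mem_univ (s, a1, a2))) hw
      _ = G.rabs := by
          simp only [← Finset.sum_mul]
          rw [G.weight_total hb hπ1 hπ2, one_mul]
  have ht2 : |∑ a1, ∑ o, G.Pr b π1 π2 a1 o * V (G.beliefUpd b a1 π2 o)| ≤ K := by
    calc |∑ a1, ∑ o, G.Pr b π1 π2 a1 o * V (G.beliefUpd b a1 π2 o)|
        ≤ ∑ a1, ∑ o, G.Pr b π1 π2 a1 o * K := by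
          refine (Finset.abs_sum_le_sum_abs _ _).trans
            (Finset.sum_le_sum fun a1 _ => (Finset.abs_sum_le_sum_abs _ _).trans
              (Finset.sum_le_sum fun o _ => ?_))
          rw [abs_mul, abs_of_nonneg (G.Pr_nonneg' hb hπ1 hπ2 a1 o)]
          exact mul_le_mul_of_nonneg_left (hτ a1 o) (G.Pr_nonneg' hb hπ1 hπ2 a1 o)
      _ = K := by
          simp only [← Finset.sum_mul]
          rw [G.Pr_total hb hπ1 hπ2, one_mul]
  calc |G.stageU V b π1 π2|
      ≤ |∑ s, ∑ a1, ∑ a2, b s * π1 a1 * π2 s a2 * G.R s a1 a2| +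
        |G.γ * ∑ a1, ∑ o, G.Pr b π1 π2 a1 o * V (G.beliefUpd b a1 π2 o)| :=
        abs_add_le _ _
    _ ≤ G.rabs + G.γ * K := by
        gcongr
        rw [abs_mul, abs_of_pos G.γ_pos]
        exact mul_le_mul_of_nonneg_left ht2 G.γ_pos.le
lemma simplex_nonempty' {ι : Type*} [Fintype ι] [Nonempty ι] :
    Nonempty (stdSimplex ℝ ι) := by
  obtain ⟨a0⟩ := ‹Nonempty ι›
  classical
  refine ⟨⟨fun a => if a = a0 then 1 else 0, fun a => by positivity, ?_⟩⟩
  simp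

lemma pi2_nonempty' : Nonempty (Pi2 S A2) := by
  obtain ⟨⟨p, hp⟩⟩ := simplex_nonempty' (ι := A2)
  exact ⟨⟨fun _ => p, fun s => hp⟩⟩

/-- Pointwise contractivity criterion: if `(π1V, π2V)` and `(π1W, π2W)` are Nash equilibria
of the stage games `[HV](b)` and `[HW](b)`, `[HV](b) ≤ [HW](b)`, and the gap `W - V` at
every updated belief reached with positive probability under `(π1W, π2V)` is at most `C`,
then `[HW](b) - [HV](b) ≤ γC`. -/
theorem pointwise_contractivity (G : OSPOSG S A1 A2 O)
    (V W : (S → ℝ) → ℝ)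
    (hVconv : ConvexOn ℝ (stdSimplex ℝ S) V) (hVcont : ContinuousOn V (stdSimplex ℝ S))
    (hWconv : ConvexOn ℝ (stdSimplex ℝ S) W) (hWcont : ContinuousOn W (stdSimplex ℝ S))
    (b : S → ℝ) (hb : b ∈ stdSimplex ℝ S)
    (hHle : G.Hop V b ≤ G.Hop W b)
    (π1V : A1 → ℝ) (hπ1V : π1V ∈ stdSimplex ℝ A1)
    (π2V : S → A2 → ℝ) (hπ2V : π2V ∈ Pi2 S A2)
    (hNashV1 : ∀ π1 ∈ stdSimplex ℝ A1, G.stageU V b π1 π2V ≤ G.stageU V b π1V π2V)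
    (hNashV2 : ∀ π2 ∈ Pi2 S A2, G.stageU V b π1V π2V ≤ G.stageU V b π1V π2)
    (π1W : A1 → ℝ) (hπ1W : π1W ∈ stdSimplex ℝ A1)
    (π2W : S → A2 → ℝ) (hπ2W : π2W ∈ Pi2 S A2)
    (hNashW1 : ∀ π1 ∈ stdSimplex ℝ A1, G.stageU W b π1 π2W ≤ G.stageU W b π1W π2W)
    (hNashW2 : ∀ π2 ∈ Pi2 S A2, G.stageU W b π1W π2W ≤ G.stageU W b π1W π2)
    (C : ℝ) (hC : 0 ≤ C)
    (hgap : ∀ a1 : A1, 0 < π1W a1 → ∀ o : O, 0 < G.Pr b π1W π2V a1 o →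
      W (G.beliefUpd b a1 π2V o) - V (G.beliefUpd b a1 π2V o) ≤ C) :
    G.Hop W b - G.Hop V b ≤ G.γ * C := by
  have hne1 : Nonempty (stdSimplex ℝ A1) := simplex_nonempty'
  have hne2 : Nonempty (Pi2 S A2) := pi2_nonempty'
  -- bounds on V and W over the simplex
  obtain ⟨KV, hKV⟩ := isCompact_stdSimplex ℝ S |>.exists_bound_of_continuousOn hVcont
  obtain ⟨KW, hKW⟩ := isCompact_stdSimplex ℝ S |>.exists_bound_of_continuousOn hWcont
  set K : ℝ := max (max KV |V (fun _ => 0)|) (max KW |W (fun _ => 0)|) with hK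
  have hKVs : ∀ p ∈ stdSimplex ℝ S, |V p| ≤ K := fun p hp =>
    le_trans (Real.norm_eq_abs _ ▸ hKV p hp) (le_max_left _ _ |>.trans (le_max_left _ _))
  have hKV0 : |V (fun _ => 0)| ≤ K :=
    (le_max_right _ _).trans (le_max_left _ _)
  have hKWs : ∀ p ∈ stdSimplex ℝ S, |W p| ≤ K := fun p hp =>
    le_trans (Real.norm_eq_abs _ ▸ hKW p hp) (le_max_left _ _ |>.trans (le_max_right _ _))
  have hKW0 : |W (fun _ => 0)| ≤ K :=
    (le_max_right _ _).trans (le_max_right _ _)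
  set M : ℝ := G.rabs + G.γ * K with hM
  have hMV : ∀ π1 ∈ stdSimplex ℝ A1, ∀ π2 ∈ Pi2 S A2, |G.stageU V b π1 π2| ≤ M :=
    fun π1 h1 π2 h2 => G.stageU_abs_le V hb h1 h2 K hKVs hKV0
  have hMW : ∀ π1 ∈ stdSimplex ℝ A1, ∀ π2 ∈ Pi2 S A2, |G.stageU W b π1 π2| ≤ M :=
    fun π1 h1 π2 h2 => G.stageU_abs_le W hb h1 h2 K hKWs hKW0
  have hbddW : ∀ π1 : stdSimplex ℝ A1,
      BddBelow (Set.range fun π2 : Pi2 S A2 => G.stageU W b π1.1 π2.1) := by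
    rintro π1
    refine ⟨-M, ?_⟩
    rintro x ⟨π2, rfl⟩
    exact neg_le_of_abs_le (hMW π1.1 π1.2 π2.1 π2.2)
  have hbddV : ∀ π1 : stdSimplex ℝ A1,
      BddBelow (Set.range fun π2 : Pi2 S A2 => G.stageU V b π1.1 π2.1) := by
    rintro π1
    refine ⟨-M, ?_⟩
    rintro x ⟨π2, rfl⟩
    exact neg_le_of_abs_le (hMV π1.1 π1.2 π2.1 π2.2)
  -- Hop W b ≤ stageU W b π1W π2W
  have hsupW : G.Hop W b ≤ G.stageU W b π1W π2W := by
    refine ciSup_le fun π1 => ?_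
    have h1 : (⨅ π2 : Pi2 S A2, G.stageU W b π1.1 π2.1) ≤ G.stageU W b π1.1 π2W :=
      ciInf_le (hbddW π1) (⟨π2W, hπ2W⟩ : Pi2 S A2)
    exact h1.trans (hNashW1 π1.1 π1.2)
  -- stageU V b π1V π2V ≤ Hop V b
  have hinfV : G.stageU V b π1V π2V ≤ G.Hop V b := by
    have h1 : G.stageU V b π1V π2V ≤ ⨅ π2 : Pi2 S A2, G.stageU V b π1V π2.1 :=
      le_ciInf fun π2 => hNashV2 π2.1 π2.2
    have hbdd : BddAbove (Set.range fun π1 : stdSimplex ℝ A1 =>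
        ⨅ π2 : Pi2 S A2, G.stageU V b π1.1 π2.1) := ?_
    · exact h1.trans (le_ciSup (f := fun π1 : stdSimplex ℝ A1 =>
        ⨅ π2 : Pi2 S A2, G.stageU V b π1.1 π2.1) hbdd ⟨π1V, hπ1V⟩)
    refine ⟨M, ?_⟩
    rintro x ⟨π1, rfl⟩
    exact le_trans (ciInf_le (hbddV π1) (⟨π2V, hπ2V⟩ : Pi2 S A2))
      (le_of_abs_le (hMV π1.1 π1.2 π2V hπ2V))
  -- core inequality
  have hcore : G.stageU W b π1W π2W - G.stageU V b π1V π2V ≤ G.γ * C := by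
    have h1 : G.stageU W b π1W π2W ≤ G.stageU W b π1W π2V := hNashW2 π2V hπ2V
    have h2 : G.stageU V b π1W π2V ≤ G.stageU V b π1V π2V := hNashV1 π1W hπ1W
    have h3 : G.stageU W b π1W π2V - G.stageU V b π1W π2V ≤ G.γ * C := by
      rw [G.stageU_diff V W b π1W π2V]
      have hsum : (∑ a1, ∑ o, G.Pr b π1W π2V a1 o *
          (W (G.beliefUpd b a1 π2V o) - V (G.beliefUpd b a1 π2V o))) ≤ C := by
        calc (∑ a1, ∑ o, G.Pr b π1W π2V a1 o *
            (W (G.beliefUpd b a1 π2V o) - V (G.beliefUpd b a1 π2V o)))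
            ≤ ∑ a1, ∑ o, G.Pr b π1W π2V a1 o * C := by
              refine Finset.sum_le_sum fun a1 _ => Finset.sum_le_sum fun o _ => ?_
              rcases (G.Pr_nonneg' hb hπ1W hπ2V a1 o).lt_or_eq with hpos | hzero
              · have hπpos : 0 < π1W a1 := by
                  rcases (hπ1W.1 a1).lt_or_eq with h | h
                  · exact h
                  · exfalso
                    have : G.Pr b π1W π2V a1 o = 0 := by
                      unfold Pr
                      refine Finset.sum_eq_zero fun s _ => Finset.sum_eq_zero fun a2 _ =>
                        Finset.sum_eq_zero fun s' _ => ?_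
                      rw [← h]
                      ring
                    exact absurd this (ne_of_gt hpos)
                exact mul_le_mul_of_nonneg_left (hgap a1 hπpos o hpos) hpos.le
              · rw [← hzero]; simp
          _ = C := by
              simp only [← Finset.sum_mul]
              rw [G.Pr_total hb hπ1W hπ2V, one_mul]
      exact mul_le_mul_of_nonneg_left hsum G.γ_pos.le
    linarith
  linarith

end OSPOSG
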